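/- Fix integers d ≥ 3 and k ≥ 1, and let H = (V, E) be a hypergraph in which every hyperedge has at most d vertices. Let S be a minimum hitting set of H with |S| ≤ k, and suppose there exists a maximal collection W' ⊆ E of pairwise weakly related hyperedges such that every vertex of V is contained in at most k^{d−2} members of W'. Then there exists a good hyperedge subset W ⊆ E such that: (1) S ⊆ V(W); (2) |W| ≤ k^{d−1}; and (3) every vertex of S is contained in at most k^{d−2} members of W. -/

import Mathlib

/-- For a minimum hitting set `S` of size at most `k`, if there is a
maximal collection of pairwise weakly related hyperedges in which every vertex occurs
at most `k^(d-2)` times, then there is a good hyperedge subset `W` with `S ⊆ V(W)`,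
`|W| ≤ k^(d-1)`, and every vertex of `S` in at most `k^(d-2)` members of `W`. -/
theorem stmt_9 {α : Type*} [DecidableEq α]
    (d k : ℕ) (hd : 3 ≤ d) (hk : 1 ≤ k)
    (V : Finset α) (E : Finset (Finset α))
    (hEV : ∀ e ∈ E, e ⊆ V) (hEne : ∀ e ∈ E, e.Nonempty)
    (hEd : ∀ e ∈ E, e.card ≤ d)
    (S : Finset α) (hSV : S ⊆ V) (hSk : S.card ≤ k)
    (hShit : ∀ e ∈ E, (S ∩ e).Nonempty)
    (hSmin : ∀ S' : Finset α, S' ⊆ V → (∀ e ∈ E, (S' ∩ e).Nonempty) → S.card ≤ S'.card)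
    (W' : Finset (Finset α)) (hW'E : W' ⊆ E)
    (hpair : ∀ e1 ∈ W', ∀ e2 ∈ W', e1 ≠ e2 → (e1 ∩ e2).card ≤ d - 2)
    (hmax : ∀ e ∈ E, e ∉ W' → ∃ e' ∈ W', d - 1 ≤ (e ∩ e').card)
    (hdeg : ∀ v ∈ V, (W'.filter (fun f => v ∈ f)).card ≤ k ^ (d - 2)) :
    ∃ W : Finset (Finset α), W ⊆ E ∧
      (∃ W'' : Finset (Finset α), W'' ⊆ W ∧
        (∀ e1 ∈ W'', ∀ e2 ∈ W'', e1 ≠ e2 → (e1 ∩ e2).card ≤ d - 2) ∧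
        (∀ e ∈ E, e ∉ W'' → ∃ e' ∈ W'', d - 1 ≤ (e ∩ e').card)) ∧
      S ⊆ W.biUnion id ∧
      W.card ≤ k ^ (d - 1) ∧
      (∀ v ∈ S, (W.filter (fun f => v ∈ f)).card ≤ k ^ (d - 2)) := by
  classical
  -- Every vertex of S has a private edge
  have hpriv : ∀ v, ∃ e, v ∈ S → e ∈ E ∧ S ∩ e = {v} := by
    intro v
    by_cases hv : v ∈ S
    · by_contra hcon
      push_neg at hcon
      have hall : ∀ e ∈ E, S ∩ e ≠ {v} := fun e he heq => (hcon e).2 he heq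
      have hhit : ∀ e ∈ E, ((S.erase v) ∩ e).Nonempty := by
        intro e he
        obtain ⟨u, hu⟩ := hShit e he
        have hne : ¬ (S ∩ e ⊆ {v}) := by
          intro hsub
          apply hall e he
          apply Finset.Subset.antisymm hsub
          intro x hx
          simp only [Finset.mem_singleton] at hx
          subst hx
          rcases Finset.mem_singleton.mp (hsub hu) with rfl
          exact hu
        obtain ⟨w, hw, hwv⟩ := Finset.not_subset.mp hne
        simp only [Finset.mem_singleton] at hwv
        exact ⟨w, Finset.mem_inter.mpr ⟨Finset.mem_erase.mpr ⟨hwv, (Finset.mem_inter.mp hw).1⟩,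
          (Finset.mem_inter.mp hw).2⟩⟩
      have := hSmin (S.erase v) ((Finset.erase_subset v S).trans hSV) hhit
      have hlt : (S.erase v).card < S.card := Finset.card_erase_lt_of_mem hv
      omega
    · exact ⟨∅, fun h => absurd h hv⟩
  choose f hf using hpriv
  set U : Finset α := S.filter (fun v => ∀ e ∈ W', v ∉ e) with hU
  set W : Finset (Finset α) := W' ∪ U.image f with hWdef
  have hfU : ∀ v ∈ U, f v ∈ E ∧ S ∩ f v = {v} := fun v hv => hf v (Finset.mem_filter.mp hv).1
  refine ⟨W, ?_, ⟨W', Finset.subset_union_left, hpair, hmax⟩, ?_, ?_, ?_⟩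
  · -- W ⊆ E
    intro e he
    rcases Finset.mem_union.mp he with h | h
    · exact hW'E h
    · obtain ⟨v, hv, rfl⟩ := Finset.mem_image.mp h
      exact (hfU v hv).1
  · -- S ⊆ V(W)
    intro v hv
    by_cases hvU : v ∈ U
    · refine Finset.mem_biUnion.mpr ⟨f v, Finset.mem_union_right _ (Finset.mem_image_of_mem f hvU), ?_⟩
      have := (hfU v hvU).2
      have : v ∈ S ∩ f v := this ▸ Finset.mem_singleton_self v
      exact (Finset.mem_inter.mp this).2
    · simp only [hU, Finset.mem_filter, not_and, not_forall] at hvU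
      obtain ⟨e, he, hve⟩ := hvU hv
      push_neg at hve
      exact Finset.mem_biUnion.mpr ⟨e, Finset.mem_union_left _ he, hve⟩
  · -- card bound
    set C : Finset α := S.filter (fun v => ¬ ∀ e ∈ W', v ∉ e) with hC
    have hcards : U.card + C.card = S.card := Finset.card_filter_add_card_filter_not _
    have hW'sub : W' ⊆ C.biUnion (fun v => W'.filter (fun e => v ∈ e)) := by
      intro e he
      obtain ⟨u, hu⟩ := hShit e (hW'E he)
      rcases Finset.mem_inter.mp hu with ⟨huS, hue⟩
      refine Finset.mem_biUnion.mpr ⟨u, ?_, Finset.mem_filter.mpr ⟨he, hue⟩⟩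
      refine Finset.mem_filter.mpr ⟨huS, ?_⟩
      push_neg
      exact ⟨e, he, hue⟩
    have hW'card : W'.card ≤ C.card * k ^ (d - 2) := by
      calc W'.card ≤ (C.biUnion (fun v => W'.filter (fun e => v ∈ e))).card :=
            Finset.card_le_card hW'sub
        _ ≤ ∑ v ∈ C, (W'.filter (fun e => v ∈ e)).card := Finset.card_biUnion_le
        _ ≤ ∑ _v ∈ C, k ^ (d - 2) := by
            refine Finset.sum_le_sum fun v hv => ?_
            exact hdeg v (hSV (Finset.mem_filter.mp hv).1)
        _ = C.card * k ^ (d - 2) := by rw [Finset.sum_const, smul_eq_mul]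
    have hUcard : (U.image f).card ≤ U.card * k ^ (d - 2) := by
      calc (U.image f).card ≤ U.card := Finset.card_image_le
        _ ≤ U.card * k ^ (d - 2) := Nat.le_mul_of_pos_right _ (Nat.pow_pos hk)
    have hpow : k * k ^ (d - 2) = k ^ (d - 1) := by
      rw [← pow_succ']
      congr 1
      omega
    calc W.card ≤ W'.card + (U.image f).card := Finset.card_union_le _ _
      _ ≤ C.card * k ^ (d - 2) + U.card * k ^ (d - 2) := Nat.add_le_add hW'card hUcard
      _ = (U.card + C.card) * k ^ (d - 2) := by ring
      _ = S.card * k ^ (d - 2) := by rw [hcards]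
      _ ≤ k * k ^ (d - 2) := Nat.mul_le_mul_right _ hSk
      _ = k ^ (d - 1) := hpow
  · -- degree bound
    intro v hvS
    have hfilt : W.filter (fun e => v ∈ e)
        = W'.filter (fun e => v ∈ e) ∪ (U.image f).filter (fun e => v ∈ e) := by
      rw [hWdef, Finset.filter_union]
    by_cases hvU : v ∈ U
    · have h1 : W'.filter (fun e => v ∈ e) = ∅ := by
        rw [Finset.filter_eq_empty_iff]
        exact fun e he => (Finset.mem_filter.mp hvU).2 e he
      have h2 : (U.image f).filter (fun e => v ∈ e) ⊆ {f v} := by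
        intro e he
        rcases Finset.mem_filter.mp he with ⟨hei, hve⟩
        obtain ⟨u, hu, rfl⟩ := Finset.mem_image.mp hei
        have : v ∈ S ∩ f u := Finset.mem_inter.mpr ⟨hvS, hve⟩
        rw [(hfU u hu).2, Finset.mem_singleton] at this
        subst this
        exact Finset.mem_singleton_self _
      calc (W.filter (fun e => v ∈ e)).card
          ≤ (W'.filter (fun e => v ∈ e)).card + ((U.image f).filter (fun e => v ∈ e)).card := by
            rw [hfilt]; exact Finset.card_union_le _ _
        _ ≤ 0 + 1 := by
            rw [h1]
            exact Nat.add_le_add (le_refl 0) ((Finset.card_le_card h2).trans (by simp))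
        _ ≤ k ^ (d - 2) := by simpa using Nat.one_le_pow _ _ hk
    · have h2 : (U.image f).filter (fun e => v ∈ e) = ∅ := by
        rw [Finset.filter_eq_empty_iff]
        intro e hei hve
        obtain ⟨u, hu, rfl⟩ := Finset.mem_image.mp hei
        have : v ∈ S ∩ f u := Finset.mem_inter.mpr ⟨hvS, hve⟩
        rw [(hfU u hu).2, Finset.mem_singleton] at this
        exact hvU (this ▸ hu)
      calc (W.filter (fun e => v ∈ e)).card
          ≤ (W'.filter (fun e => v ∈ e)).card + ((U.image f).filter (fun e => v ∈ e)).card := by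
            rw [hfilt]; exact Finset.card_union_le _ _
        _ ≤ k ^ (d - 2) + 0 := by
            rw [h2]; exact Nat.add_le_add (hdeg v (hSV hvS)) (by simp)
        _ = k ^ (d - 2) := by simp
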